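/- If a : ℕ → ℝ satisfies |a(n)| ≤ d₄(n) for all n, and x₁ < x₂ are reals with S(x₂) - S(x₁) > 2c·x^{3/8} where S(y) = Σ_{n≤y} a(n) and x₁, x₂ ≤ 2x, then for every ε > 0 the number of integers n ∈ (x₁, x₂] with a(n) > 0 is at least c'·x^{3/8-ε} for some constant c' > 0 depending only on ε and c, provided x is sufficiently large. -/

import Mathlib

/-- `d₄ n`: number of quadruples `(a,b,c,d)` of positive integers with `a*b*c*d = n`. -/
def d4 (n : ℕ) : ℕ :=
  ((Finset.Icc 1 n ×ˢ Finset.Icc 1 n ×ˢ Finset.Icc 1 n ×ˢ Finset.Icc 1 n).filter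
    (fun p => p.1 * p.2.1 * p.2.2.1 * p.2.2.2 = n)).card

/-- Summatory function `S(y) = ∑_{n ≤ y} a(n)`. -/
noncomputable def Ssum (a : ℕ → ℝ) (y : ℝ) : ℝ := ∑ n ∈ Finset.Icc 1 ⌊y⌋₊, a n

lemma d4_le_tau_cubed (n : ℕ) (hn : n ≠ 0) : d4 n ≤ n.divisors.card ^ 3 := by
  classical
  rw [d4]
  have h : ((Finset.Icc 1 n ×ˢ Finset.Icc 1 n ×ˢ Finset.Icc 1 n ×ˢ Finset.Icc 1 n).filter
      (fun p => p.1 * p.2.1 * p.2.2.1 * p.2.2.2 = n)).card ≤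
      (n.divisors ×ˢ n.divisors ×ˢ n.divisors).card := by
    apply Finset.card_le_card_of_injOn (fun p => (p.1, p.2.1, p.2.2.1))
    · rintro ⟨a, b, c, d⟩ hp
      simp only [Finset.mem_coe, Finset.mem_filter, Finset.mem_product, Finset.mem_Icc] at hp
      obtain ⟨⟨ha, hb, hc, hd⟩, hprod⟩ := hp
      simp only [Finset.mem_coe, Finset.mem_product, Nat.mem_divisors]
      exact ⟨⟨⟨b * c * d, by rw [← hprod]; ring⟩, hn⟩,
        ⟨⟨a * c * d, by rw [← hprod]; ring⟩, hn⟩,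
        ⟨⟨a * b * d, by rw [← hprod]; ring⟩, hn⟩⟩
    · rintro ⟨a, b, c, d⟩ hp ⟨a', b', c', d'⟩ hq heq
      simp only [Finset.mem_coe, Finset.mem_filter, Finset.mem_product, Finset.mem_Icc] at hp hq
      obtain ⟨⟨ha, hb, hc, hd⟩, hprod⟩ := hp
      obtain ⟨⟨ha', hb', hc', hd'⟩, hprod'⟩ := hq
      simp only [Prod.mk.injEq] at heq
      obtain ⟨h1, h2, h3⟩ := heq
      subst h1; subst h2; subst h3
      have habc : 0 < a * b * c :=
        Nat.mul_pos (Nat.mul_pos ha.1 hb.1) hc.1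
      have hdd : d = d' := Nat.eq_of_mul_eq_mul_left habc (hprod.trans hprod'.symm)
      simp [hdd]
  calc _ ≤ _ := h
    _ = n.divisors.card ^ 3 := by simp [Finset.card_product]; ring

lemma tau_bound (δ : ℝ) (hδ : 0 < δ) :
    ∃ C : ℝ, 1 ≤ C ∧ ∀ n : ℕ, n ≠ 0 → (n.divisors.card : ℝ) ≤ C * (n : ℝ) ^ δ := by
  classical
  have hlog2 : 0 < Real.log 2 := Real.log_pos (by norm_num)
  set K : ℝ := 1 / (δ * Real.log 2) + 1 with hKdef
  have hK1 : (1:ℝ) ≤ K := le_add_of_nonneg_left (by positivity)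
  set B : ℝ := (2:ℝ) ^ ((1:ℝ)/δ) with hBdef
  set N : ℕ := ⌈B⌉₊ with hNdef
  have hBpos : (0:ℝ) < B := by positivity
  have hBN : B ≤ (N:ℝ) := hNdef ▸ Nat.le_ceil B
  clear_value K B N
  refine ⟨K ^ (N + 1), one_le_pow₀ hK1, ?_⟩
  intro n hn
  have key : ∀ p k : ℕ, p.Prime →
      ((k:ℝ) + 1) ≤ (if (p:ℝ) < B then K else 1) * ((p:ℝ) ^ k) ^ δ := by
    intro p k hp
    have hp2 : (2:ℝ) ≤ (p:ℝ) := by exact_mod_cast hp.two_le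
    have hppos : (0:ℝ) < (p:ℝ) := by linarith
    split_ifs with hb
    · have h1 : ((2:ℝ) ^ (k:ℝ)) ^ δ ≤ ((p:ℝ) ^ k) ^ δ := by
        rw [← Real.rpow_natCast (p:ℝ) k]
        exact Real.rpow_le_rpow (by positivity)
          (Real.rpow_le_rpow (by norm_num) hp2 (by positivity)) hδ.le
      have h2 : ((2:ℝ) ^ (k:ℝ)) ^ δ = Real.exp ((k:ℝ) * δ * Real.log 2) := by
        rw [← Real.rpow_mul (by norm_num), Real.rpow_def_of_pos (by norm_num)]
        ring_nf
      set E : ℝ := Real.exp ((k:ℝ) * δ * Real.log 2) with hEdef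
      have h3 : (k:ℝ) * δ * Real.log 2 ≤ E := by
        have := Real.add_one_le_exp ((k:ℝ) * δ * Real.log 2)
        rw [← hEdef] at this
        linarith
      have h4 : (1:ℝ) ≤ E := Real.one_le_exp (by positivity)
      have h6 : (k:ℝ) ≤ (1 / (δ * Real.log 2)) * E := by
        have hm := mul_le_mul_of_nonneg_left h3 (le_of_lt (by positivity :
          (0:ℝ) < 1 / (δ * Real.log 2)))
        have he : (1 / (δ * Real.log 2)) * ((k:ℝ) * δ * Real.log 2) = k := by
          field_simp
        linarith
      have h5 : (k:ℝ) + 1 ≤ K * E := by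
        have hKe : K * E = (1 / (δ * Real.log 2)) * E + E := by rw [hKdef]; ring
        linarith
      calc ((k:ℝ) + 1) ≤ K * E := h5
        _ = K * ((2:ℝ) ^ (k:ℝ)) ^ δ := by rw [h2]
        _ ≤ K * ((p:ℝ) ^ k) ^ δ := mul_le_mul_of_nonneg_left h1 (by linarith)
    · push_neg at hb
      have hpd : (2:ℝ) ≤ (p:ℝ) ^ δ := by
        have h := Real.rpow_le_rpow hBpos.le hb hδ.le
        rwa [hBdef, ← Real.rpow_mul (by norm_num), one_div_mul_cancel hδ.ne',
          Real.rpow_one] at h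
      have heq : ((p:ℝ) ^ k) ^ δ = ((p:ℝ) ^ δ) ^ k := by
        rw [← Real.rpow_natCast (p:ℝ) k, ← Real.rpow_mul hppos.le, mul_comm,
          Real.rpow_mul hppos.le, Real.rpow_natCast]
      have h2k : ((k:ℝ) + 1) ≤ (2:ℝ) ^ k := by
        have h := Nat.lt_two_pow_self (n := k)
        have h' : (k + 1 : ℕ) ≤ 2 ^ k := h
        exact_mod_cast h'
      rw [one_mul, heq]
      exact h2k.trans (pow_le_pow_left₀ (by norm_num) hpd k)
  have hcard : (n.divisors.card : ℝ) =
      ∏ p ∈ n.primeFactors, ((n.factorization p : ℝ) + 1) := by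
    rw [Nat.card_divisors hn]; push_cast; rfl
  have hself : (∏ p ∈ n.primeFactors, p ^ n.factorization p) = n := by
    have h := Nat.factorization_prod_pow_eq_self hn
    rwa [Finsupp.prod, Nat.support_factorization] at h
  have hns : (n:ℝ) ^ δ = ∏ p ∈ n.primeFactors, ((p:ℝ) ^ (n.factorization p)) ^ δ := by
    rw [Real.finset_prod_rpow _ _ (fun p _ => by positivity) δ]
    congr 1
    calc (n:ℝ) = ((∏ p ∈ n.primeFactors, p ^ n.factorization p : ℕ) : ℝ) := by
          rw [hself]
      _ = ∏ p ∈ n.primeFactors, ((p:ℝ) ^ n.factorization p) := by push_cast; rfl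
  have hprodle : (n.divisors.card : ℝ) ≤
      (∏ p ∈ n.primeFactors, (if (p:ℝ) < B then K else 1)) * (n:ℝ) ^ δ := by
    rw [hcard, hns, ← Finset.prod_mul_distrib]
    apply Finset.prod_le_prod (fun p _ => by positivity)
    intro p hp
    exact key p (n.factorization p) (Nat.prime_of_mem_primeFactors hp)
  have hKle : (∏ p ∈ n.primeFactors, (if (p:ℝ) < B then K else 1)) ≤ K ^ (N + 1) := by
    have h₁ : (∏ p ∈ n.primeFactors.filter (fun p : ℕ => (p:ℝ) < B),
        (if (p:ℝ) < B then K else (1:ℝ))) =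
        K ^ (n.primeFactors.filter (fun p : ℕ => (p:ℝ) < B)).card := by
      rw [Finset.prod_congr rfl (fun p hp => if_pos (Finset.mem_filter.mp hp).2),
        Finset.prod_const]
    have h₂ : (∏ p ∈ n.primeFactors.filter (fun p : ℕ => ¬ (p:ℝ) < B),
        (if (p:ℝ) < B then K else (1:ℝ))) = 1 :=
      Finset.prod_eq_one (fun p hp => if_neg (Finset.mem_filter.mp hp).2)
    have h₃ := Finset.prod_filter_mul_prod_filter_not n.primeFactors
      (fun p : ℕ => (p:ℝ) < B) (fun p : ℕ => if (p:ℝ) < B then K else (1:ℝ))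
    rw [h₁, h₂, mul_one] at h₃
    rw [← h₃]
    apply pow_le_pow_right₀ hK1
    have hsub : n.primeFactors.filter (fun p : ℕ => (p:ℝ) < B) ⊆ Finset.range (N + 1) := by
      intro p hp
      rw [Finset.mem_filter] at hp
      rw [Finset.mem_range]
      have hlt : (p:ℝ) < (N:ℝ) + 1 := lt_of_lt_of_le hp.2 (by linarith)
      exact_mod_cast hlt
    calc (n.primeFactors.filter (fun p : ℕ => (p:ℝ) < B)).card
        ≤ (Finset.range (N+1)).card := Finset.card_le_card hsub
      _ = N + 1 := Finset.card_range _
  calc (n.divisors.card : ℝ) ≤ _ := hprodle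
    _ ≤ K ^ (N + 1) * (n:ℝ) ^ δ :=
        mul_le_mul_of_nonneg_right hKle (by positivity)

lemma d4_bound (ε : ℝ) (hε : 0 < ε) :
    ∃ C : ℝ, 1 ≤ C ∧ ∀ n : ℕ, n ≠ 0 → (d4 n : ℝ) ≤ C * (n : ℝ) ^ ε := by
  obtain ⟨C₀, hC₀1, hC₀⟩ := tau_bound (ε/3) (by linarith)
  refine ⟨C₀ ^ 3, one_le_pow₀ hC₀1, fun n hn => ?_⟩
  have h1 : (d4 n : ℝ) ≤ ((n.divisors.card : ℝ)) ^ 3 := by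
    exact_mod_cast Nat.cast_le.mpr (d4_le_tau_cubed n hn)
  have h2 : ((n.divisors.card : ℝ)) ^ 3 ≤ (C₀ * (n:ℝ) ^ (ε/3)) ^ 3 := by
    apply pow_le_pow_left₀ (by positivity) (hC₀ n hn)
  have h3 : (C₀ * (n:ℝ) ^ (ε/3)) ^ 3 = C₀ ^ 3 * (n:ℝ) ^ ε := by
    rw [mul_pow, ← Real.rpow_natCast ((n:ℝ) ^ (ε/3)) 3, ← Real.rpow_mul (by positivity)]
    norm_num
  linarith


theorem stmt3 (a : ℕ → ℝ) (c : ℝ) (hc : 0 < c)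
    (hbound : ∀ n : ℕ, |a n| ≤ (d4 n : ℝ)) :
    ∀ ε > (0:ℝ), ∃ c' > (0:ℝ), ∃ x₀ : ℝ, ∀ x ≥ x₀, ∀ x₁ x₂ : ℝ,
      x₁ < x₂ → x₁ ≤ 2 * x → x₂ ≤ 2 * x →
      Ssum a x₂ - Ssum a x₁ > 2 * c * x ^ ((3:ℝ)/8) →
      c' * x ^ ((3:ℝ)/8 - ε) ≤
        (((Finset.Ioc ⌊x₁⌋₊ ⌊x₂⌋₊).filter (fun n => 0 < a n)).card : ℝ) := by
  intro ε hε
  obtain ⟨C, hC1, hC⟩ := d4_bound ε hε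
  have h2e : (0:ℝ) < (2:ℝ) ^ ε := Real.rpow_pos_of_pos (by norm_num) ε
  refine ⟨2 * c / (C * (2:ℝ) ^ ε), by positivity, 1, ?_⟩
  intro x hx x₁ x₂ h12 hx1 hx2 hS
  have hx0 : (0:ℝ) < x := lt_of_lt_of_le one_pos hx
  have hxpow : (0:ℝ) < x ^ ((3:ℝ)/8) := Real.rpow_pos_of_pos hx0 _
  set m₁ := ⌊x₁⌋₊ with hm₁
  set m₂ := ⌊x₂⌋₊ with hm₂
  have hm : m₁ ≤ m₂ := Nat.floor_le_floor h12.le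
  have hdiff : Ssum a x₂ - Ssum a x₁ = ∑ n ∈ Finset.Ioc m₁ m₂, a n := by
    unfold Ssum
    have e1 : Finset.Icc 1 m₁ = Finset.Ioc 0 m₁ := rfl
    have e2 : Finset.Icc 1 m₂ = Finset.Ioc 0 m₂ := rfl
    have h := Finset.sum_Ioc_consecutive (fun n => a n) (Nat.zero_le m₁) hm
    rw [e1, e2]
    linarith [h]
  rw [hdiff] at hS
  have hsumpos : (0:ℝ) < ∑ n ∈ Finset.Ioc m₁ m₂, a n := by
    have : (0:ℝ) < 2 * c * x ^ ((3:ℝ)/8) := by positivity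
    linarith
  -- x₂ must be nonnegative
  have hx2nn : (0:ℝ) ≤ x₂ := by
    by_contra hneg
    push_neg at hneg
    have : m₂ = 0 := by
      rw [hm₂, Nat.floor_eq_zero]
      linarith
    rw [this] at hsumpos
    have : Finset.Ioc m₁ 0 = ∅ := by
      apply Finset.Ioc_eq_empty
      omega
    rw [this, Finset.sum_empty] at hsumpos
    exact lt_irrefl _ hsumpos
  set P := (Finset.Ioc m₁ m₂).filter (fun n => 0 < a n) with hP
  have hsplit : ∑ n ∈ Finset.Ioc m₁ m₂, a n ≤ ∑ n ∈ P, a n := by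
    have h := Finset.sum_filter_add_sum_filter_not (Finset.Ioc m₁ m₂)
      (fun n => 0 < a n) a
    have hnonpos : ∑ n ∈ (Finset.Ioc m₁ m₂).filter (fun n => ¬ 0 < a n), a n ≤ 0 :=
      Finset.sum_nonpos (fun n hn => by
        have := (Finset.mem_filter.mp hn).2
        push_neg at this
        exact this)
    rw [hP]
    linarith [h, hnonpos]
  have hterm : ∀ n ∈ P, a n ≤ C * (2 * x) ^ ε := by
    intro n hn
    rw [hP, Finset.mem_filter, Finset.mem_Ioc] at hn
    obtain ⟨⟨hn1, hn2⟩, _⟩ := hn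
    have hnne : n ≠ 0 := by omega
    have hnle : (n:ℝ) ≤ 2 * x := by
      have h1 : (n:ℝ) ≤ (m₂ : ℝ) := by exact_mod_cast hn2
      have h2 : (m₂ : ℝ) ≤ x₂ := Nat.floor_le hx2nn
      linarith
    calc a n ≤ |a n| := le_abs_self _
      _ ≤ (d4 n : ℝ) := hbound n
      _ ≤ C * (n:ℝ) ^ ε := hC n hnne
      _ ≤ C * (2 * x) ^ ε := by
          apply mul_le_mul_of_nonneg_left _ (by linarith)
          exact Real.rpow_le_rpow (by positivity) hnle hε.le
  have hsum2 : ∑ n ∈ P, a n ≤ (P.card : ℝ) * (C * (2 * x) ^ ε) := by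
    calc ∑ n ∈ P, a n ≤ ∑ _n ∈ P, C * (2 * x) ^ ε := Finset.sum_le_sum hterm
      _ = (P.card : ℝ) * (C * (2 * x) ^ ε) := by
          rw [Finset.sum_const, nsmul_eq_mul]
  have hkey : 2 * c * x ^ ((3:ℝ)/8) ≤ (P.card : ℝ) * (C * (2:ℝ) ^ ε * x ^ ε) := by
    have h2x : (2 * x : ℝ) ^ ε = (2:ℝ) ^ ε * x ^ ε := Real.mul_rpow (by norm_num) hx0.le
    rw [h2x] at hsum2
    have := hS.le.trans (hsplit.trans hsum2)
    linarith [this]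
  have hxe : (0:ℝ) < x ^ ε := Real.rpow_pos_of_pos hx0 ε
  have hrw : x ^ ((3:ℝ)/8 - ε) = x ^ ((3:ℝ)/8) / x ^ ε := Real.rpow_sub hx0 _ _
  rw [hrw]
  rw [show 2 * c / (C * (2:ℝ) ^ ε) * (x ^ ((3:ℝ)/8) / x ^ ε)
      = (2 * c * x ^ ((3:ℝ)/8)) / (C * (2:ℝ) ^ ε * x ^ ε) from by ring]
  rw [div_le_iff₀ (by positivity)]
  calc 2 * c * x ^ ((3:ℝ)/8) ≤ (P.card : ℝ) * (C * (2:ℝ) ^ ε * x ^ ε) := hkey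
    _ = (P.card : ℝ) * (C * (2:ℝ) ^ ε * x ^ ε) := rfl
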